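/- Let f : ℝ → ℝ be continuous with s·f(s) ≥ 0 for all s, and let f_k be the Strauss approximations defined via G(s) = ∫₀^s f. Then f_k converges to f uniformly on every bounded subset of ℝ. -/
import Mathlib

/-- G(s) = ∫₀^s f(ξ) dξ -/
noncomputable def Gfun (f : ℝ → ℝ) (s : ℝ) : ℝ := ∫ ξ in (0:ℝ)..s, f ξ

/-- The Strauss approximation f_k of f, defined piecewise via G = Gfun f. -/
noncomputable def strauss (f : ℝ → ℝ) (k : ℕ) (s : ℝ) : ℝ :=
  let G := Gfun f
  if s ≤ -(k:ℝ) then -(k:ℝ) * (G (-(k:ℝ) - 1/(k:ℝ)) - G (-(k:ℝ)))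
  else if s ≤ -(1/(k:ℝ)) then -(k:ℝ) * (G (s - 1/(k:ℝ)) - G s)
  else if s ≤ 0 then (k:ℝ)^2 * s * (G (-(2/(k:ℝ))) - G (-(1/(k:ℝ))))
  else if s ≤ 1/(k:ℝ) then (k:ℝ)^2 * s * (G (2/(k:ℝ)) - G (1/(k:ℝ)))
  else if s ≤ (k:ℝ) then (k:ℝ) * (G (s + 1/(k:ℝ)) - G s)
  else (k:ℝ) * (G ((k:ℝ) + 1/(k:ℝ)) - G (k:ℝ))

lemma f_zero_aux (f : ℝ → ℝ) (hf : Continuous f) (hsf : ∀ s : ℝ, 0 ≤ s * f s) : f 0 = 0 := by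
  have ht : Filter.Tendsto f (nhdsWithin 0 (Set.Ioi 0)) (nhds (f 0)) :=
    (hf.tendsto 0).mono_left nhdsWithin_le_nhds
  have ht' : Filter.Tendsto f (nhdsWithin 0 (Set.Iio 0)) (nhds (f 0)) :=
    (hf.tendsto 0).mono_left nhdsWithin_le_nhds
  have h1 : 0 ≤ f 0 := by
    refine ge_of_tendsto ht ?_
    filter_upwards [self_mem_nhdsWithin] with x hx
    have hx' : (0:ℝ) < x := hx
    nlinarith [hsf x]
  have h2 : f 0 ≤ 0 := by
    refine le_of_tendsto ht' ?_
    filter_upwards [self_mem_nhdsWithin] with x hx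
    have hx' : x < (0:ℝ) := hx
    nlinarith [hsf x]
  linarith

lemma key_aux (f : ℝ → ℝ) (hf : Continuous f) (a c s C : ℝ) (hc : c ≠ 0)
    (hC : ∀ t ∈ Set.uIcc a (a + c), |f t - f s| ≤ C) :
    |c⁻¹ * (∫ t in a..(a + c), f t) - f s| ≤ C := by
  have hint : IntervalIntegrable f MeasureTheory.volume a (a + c) := hf.intervalIntegrable _ _
  have hint2 : IntervalIntegrable (fun _ : ℝ => f s) MeasureTheory.volume a (a + c) :=
    intervalIntegrable_const
  have h1 : (∫ t in a..(a + c), (f t - f s)) = (∫ t in a..(a + c), f t) - c * f s := by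
    rw [intervalIntegral.integral_sub hint hint2, intervalIntegral.integral_const]
    simp [smul_eq_mul]
  have h2 : ‖∫ t in a..(a + c), (f t - f s)‖ ≤ C * |a + c - a| :=
    intervalIntegral.norm_integral_le_of_norm_le_const
      (fun x hx => hC x (Set.uIoc_subset_uIcc hx))
  have h3 : c⁻¹ * (∫ t in a..(a + c), f t) - f s
      = c⁻¹ * ((∫ t in a..(a + c), f t) - c * f s) := by
    field_simp
  rw [h3, ← h1, abs_mul]
  have h4 : |a + c - a| = |c| := by ring_nf
  rw [Real.norm_eq_abs, h4] at h2
  calc |c⁻¹| * |∫ t in a..(a + c), (f t - f s)| ≤ |c⁻¹| * (C * |c|) := by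
        apply mul_le_mul_of_nonneg_left h2 (abs_nonneg _)
    _ = C := by
        rw [abs_inv]
        field_simp

lemma abs_sub_le' (a b : ℝ) : |a - b| ≤ |a| + |b| := by
  calc |a - b| = |a + -b| := by ring_nf
    _ ≤ |a| + |-b| := abs_add_le _ _
    _ = |a| + |b| := by rw [abs_neg]

set_option maxHeartbeats 1000000 in
/-- f_k → f uniformly on every bounded subset of ℝ. -/
theorem stmt_7 (f : ℝ → ℝ) (hf : Continuous f) (hsf : ∀ s : ℝ, 0 ≤ s * f s)
    (S : Set ℝ) (hS : Bornology.IsBounded S) :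
    TendstoUniformlyOn (fun (k : ℕ) (s : ℝ) => strauss f k s) f Filter.atTop S := by
  have hf0 : f 0 = 0 := f_zero_aux f hf hsf
  rw [Metric.tendstoUniformlyOn_iff]
  intro ε hε
  obtain ⟨M0, hM0⟩ := hS.subset_closedBall 0
  set M : ℝ := max M0 0 with hMdef
  have hMnn : (0:ℝ) ≤ M := le_max_right _ _
  have hM : ∀ s ∈ S, |s| ≤ M := by
    intro s hs
    have := hM0 hs
    rw [Metric.mem_closedBall, Real.dist_eq, sub_zero] at this
    exact this.trans (le_max_left _ _)
  set K : Set ℝ := Set.Icc (-(M+2)) (M+2) with hKdef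
  have hUC := (isCompact_Icc (a := -(M+2)) (b := M+2)).uniformContinuousOn_of_continuous
    hf.continuousOn
  rw [Metric.uniformContinuousOn_iff] at hUC
  obtain ⟨δ, hδ, hδ'⟩ := hUC (ε/2) (by linarith)
  obtain ⟨n₀, hn₀⟩ := exists_nat_ge (M + 1 + 4/δ)
  refine Filter.eventually_atTop.2 ⟨n₀, ?_⟩
  intro k hk s hs
  have hkR : (M + 1 + 4/δ : ℝ) ≤ (k:ℝ) := le_trans hn₀ (Nat.cast_le.2 hk)
  have h4δ : (0:ℝ) < 4/δ := by positivity
  have hk1 : (1:ℝ) ≤ (k:ℝ) := by linarith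
  have hkpos : (0:ℝ) < (k:ℝ) := by linarith
  have hknz : (k:ℝ) ≠ 0 := ne_of_gt hkpos
  have hinv : (0:ℝ) < 1/(k:ℝ) := by positivity
  have hinv1 : 1/(k:ℝ) ≤ 1 := by rw [div_le_one hkpos]; exact hk1
  have h4k : 4/δ ≤ (k:ℝ) := by linarith
  have h4k' : 4 ≤ δ * (k:ℝ) := by
    rw [div_le_iff₀ hδ] at h4k; linarith
  have hinvδ : 1/(k:ℝ) ≤ δ/4 := by
    rw [div_le_div_iff₀ hkpos (by norm_num : (0:ℝ) < 4)]
    nlinarith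
  have hsM := abs_le.1 (hM s hs)
  have hsK : s ∈ K := Set.mem_Icc.2 ⟨by linarith [hsM.1], by linarith [hsM.2]⟩
  have h0K : (0:ℝ) ∈ K := Set.mem_Icc.2 ⟨by linarith, by linarith⟩
  rw [Real.dist_eq]
  simp only [strauss]
  split_ifs with h1 h2 h3 h4 h5
  · -- s ≤ -k : impossible
    exact absurd h1 (by push_neg; linarith [hsM.1])
  · -- -k < s ≤ -1/k
    have hGsub : Gfun f s - Gfun f (s - 1/(k:ℝ)) = ∫ t in (s - 1/(k:ℝ))..s, f t := by
      unfold Gfun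
      exact intervalIntegral.integral_interval_sub_left (hf.intervalIntegrable _ _)
        (hf.intervalIntegrable _ _)
    have hac : s - 1/(k:ℝ) + 1/(k:ℝ) = s := by ring
    have hC : ∀ t ∈ Set.uIcc (s - 1/(k:ℝ)) (s - 1/(k:ℝ) + 1/(k:ℝ)), |f t - f s| ≤ ε/2 := by
      intro t ht
      rw [hac, Set.uIcc_of_le (by linarith)] at ht
      obtain ⟨ht1, ht2⟩ := ht
      have htK : t ∈ K := Set.mem_Icc.2 ⟨by linarith [hsM.1], by linarith [hsM.2]⟩
      have := hδ' t htK s hsK (by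
        rw [Real.dist_eq]
        have : |t - s| ≤ 1/(k:ℝ) := abs_le.2 ⟨by linarith, by linarith⟩
        linarith)
      rw [Real.dist_eq] at this
      linarith [le_abs_self (f t - f s), neg_abs_le (f t - f s)]
    have key := key_aux f hf (s - 1/(k:ℝ)) (1/(k:ℝ)) s (ε/2) (ne_of_gt hinv) hC
    rw [hac] at key
    have hrw : -(k:ℝ) * (Gfun f (s - 1/(k:ℝ)) - Gfun f s)
        = (1/(k:ℝ))⁻¹ * (∫ t in (s - 1/(k:ℝ))..s, f t) := by
      rw [← hGsub, one_div, inv_inv]; ring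
    rw [hrw, abs_sub_comm]
    linarith
  · -- -1/k < s ≤ 0
    have hGsub : Gfun f (-(2/(k:ℝ))) - Gfun f (-(1/(k:ℝ)))
        = ∫ t in (-(1/(k:ℝ)))..(-(2/(k:ℝ))), f t := by
      unfold Gfun
      exact intervalIntegral.integral_interval_sub_left (hf.intervalIntegrable _ _)
        (hf.intervalIntegrable _ _)
    have hac : -(1/(k:ℝ)) + -(1/(k:ℝ)) = -(2/(k:ℝ)) := by ring
    have hC : ∀ t ∈ Set.uIcc (-(1/(k:ℝ))) (-(1/(k:ℝ)) + -(1/(k:ℝ))), |f t - f 0| ≤ ε/2 := by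
      intro t ht
      rw [hac, Set.uIcc_of_ge (by linarith)] at ht
      obtain ⟨ht1, ht2⟩ := ht
      have htK : t ∈ K := Set.mem_Icc.2 ⟨by nlinarith, by nlinarith⟩
      have := hδ' t htK 0 h0K (by
        rw [Real.dist_eq, sub_zero]
        have : |t| ≤ 2/(k:ℝ) := abs_le.2 ⟨by linarith, by linarith⟩
        linarith)
      rw [Real.dist_eq] at this
      linarith [le_abs_self (f t - f 0), neg_abs_le (f t - f 0)]
    have key := key_aux f hf (-(1/(k:ℝ))) (-(1/(k:ℝ))) 0 (ε/2)
      (neg_ne_zero.2 (ne_of_gt hinv)) hC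
    rw [hac, hf0, sub_zero] at key
    set I : ℝ := ∫ t in (-(1/(k:ℝ)))..(-(2/(k:ℝ))), f t with hI
    have hrw : (k:ℝ)^2 * s * (Gfun f (-(2/(k:ℝ))) - Gfun f (-(1/(k:ℝ))))
        = (-(k:ℝ) * s) * ((-(1/(k:ℝ)))⁻¹ * I) := by
      rw [hGsub, show (-(1/(k:ℝ)))⁻¹ = -(k:ℝ) by rw [one_div, inv_neg, inv_inv]]
      ring
    rw [hrw]
    have hks : |(-(k:ℝ) * s)| ≤ 1 := by
      rw [abs_mul, abs_neg, abs_of_pos hkpos, abs_of_nonpos h3]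
      calc (k:ℝ) * (-s) ≤ (k:ℝ) * (1/(k:ℝ)) := by
            apply mul_le_mul_of_nonneg_left (by linarith) (le_of_lt hkpos)
        _ = 1 := by field_simp
    have hfs : |f s| < ε/2 := by
      have := hδ' s hsK 0 h0K (by
        rw [Real.dist_eq, sub_zero]
        have : |s| ≤ 1/(k:ℝ) := abs_le.2 ⟨by linarith, by linarith⟩
        linarith)
      rw [Real.dist_eq, hf0, sub_zero] at this
      exact this
    have hprod : |(-(k:ℝ) * s) * ((-(1/(k:ℝ)))⁻¹ * I)| ≤ ε/2 := by
      rw [abs_mul]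
      calc |(-(k:ℝ) * s)| * |(-(1/(k:ℝ)))⁻¹ * I| ≤ 1 * (ε/2) :=
            mul_le_mul hks key (abs_nonneg _) zero_le_one
        _ = ε/2 := one_mul _
    calc |f s - (-(k:ℝ) * s) * ((-(1/(k:ℝ)))⁻¹ * I)|
        ≤ |f s| + |(-(k:ℝ) * s) * ((-(1/(k:ℝ)))⁻¹ * I)| := abs_sub_le' _ _
      _ < ε := by linarith
  · -- 0 < s ≤ 1/k
    have hGsub : Gfun f (2/(k:ℝ)) - Gfun f (1/(k:ℝ))
        = ∫ t in (1/(k:ℝ))..(2/(k:ℝ)), f t := by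
      unfold Gfun
      exact intervalIntegral.integral_interval_sub_left (hf.intervalIntegrable _ _)
        (hf.intervalIntegrable _ _)
    have hac : 1/(k:ℝ) + 1/(k:ℝ) = 2/(k:ℝ) := by ring
    have hC : ∀ t ∈ Set.uIcc (1/(k:ℝ)) (1/(k:ℝ) + 1/(k:ℝ)), |f t - f 0| ≤ ε/2 := by
      intro t ht
      rw [hac, Set.uIcc_of_le (by linarith)] at ht
      obtain ⟨ht1, ht2⟩ := ht
      have htK : t ∈ K := Set.mem_Icc.2 ⟨by nlinarith, by nlinarith⟩
      have := hδ' t htK 0 h0K (by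
        rw [Real.dist_eq, sub_zero]
        have : |t| ≤ 2/(k:ℝ) := abs_le.2 ⟨by linarith, by linarith⟩
        linarith)
      rw [Real.dist_eq] at this
      linarith [le_abs_self (f t - f 0), neg_abs_le (f t - f 0)]
    have key := key_aux f hf (1/(k:ℝ)) (1/(k:ℝ)) 0 (ε/2) (ne_of_gt hinv) hC
    rw [hac, hf0, sub_zero] at key
    set I : ℝ := ∫ t in (1/(k:ℝ))..(2/(k:ℝ)), f t with hI
    have hrw : (k:ℝ)^2 * s * (Gfun f (2/(k:ℝ)) - Gfun f (1/(k:ℝ)))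
        = ((k:ℝ) * s) * ((1/(k:ℝ))⁻¹ * I) := by
      rw [hGsub, show ((1:ℝ)/(k:ℝ))⁻¹ = (k:ℝ) by rw [one_div, inv_inv]]
      ring
    rw [hrw]
    have h3' : 0 < s := lt_of_not_ge h3
    have hks : |(k:ℝ) * s| ≤ 1 := by
      rw [abs_mul, abs_of_pos hkpos, abs_of_pos h3']
      calc (k:ℝ) * s ≤ (k:ℝ) * (1/(k:ℝ)) := by
            apply mul_le_mul_of_nonneg_left h4 (le_of_lt hkpos)
        _ = 1 := by field_simp
    have hfs : |f s| < ε/2 := by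
      have := hδ' s hsK 0 h0K (by
        rw [Real.dist_eq, sub_zero]
        have : |s| ≤ 1/(k:ℝ) := abs_le.2 ⟨by linarith, by linarith⟩
        linarith)
      rw [Real.dist_eq, hf0, sub_zero] at this
      exact this
    have hprod : |((k:ℝ) * s) * ((1/(k:ℝ))⁻¹ * I)| ≤ ε/2 := by
      rw [abs_mul]
      calc |((k:ℝ) * s)| * |(1/(k:ℝ))⁻¹ * I| ≤ 1 * (ε/2) :=
            mul_le_mul hks key (abs_nonneg _) zero_le_one
        _ = ε/2 := one_mul _
    calc |f s - ((k:ℝ) * s) * ((1/(k:ℝ))⁻¹ * I)|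
        ≤ |f s| + |((k:ℝ) * s) * ((1/(k:ℝ))⁻¹ * I)| := abs_sub_le' _ _
      _ < ε := by linarith
  · -- 1/k < s ≤ k
    have hGsub : Gfun f (s + 1/(k:ℝ)) - Gfun f s = ∫ t in s..(s + 1/(k:ℝ)), f t := by
      unfold Gfun
      exact intervalIntegral.integral_interval_sub_left (hf.intervalIntegrable _ _)
        (hf.intervalIntegrable _ _)
    have hC : ∀ t ∈ Set.uIcc s (s + 1/(k:ℝ)), |f t - f s| ≤ ε/2 := by
      intro t ht
      rw [Set.uIcc_of_le (by linarith)] at ht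
      obtain ⟨ht1, ht2⟩ := ht
      have htK : t ∈ K := Set.mem_Icc.2 ⟨by linarith [hsM.1], by linarith [hsM.2]⟩
      have := hδ' t htK s hsK (by
        rw [Real.dist_eq]
        have : |t - s| ≤ 1/(k:ℝ) := abs_le.2 ⟨by linarith, by linarith⟩
        linarith)
      rw [Real.dist_eq] at this
      linarith [le_abs_self (f t - f s), neg_abs_le (f t - f s)]
    have key := key_aux f hf s (1/(k:ℝ)) s (ε/2) (ne_of_gt hinv) hC
    have hrw : (k:ℝ) * (Gfun f (s + 1/(k:ℝ)) - Gfun f s)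
        = (1/(k:ℝ))⁻¹ * (∫ t in s..(s + 1/(k:ℝ)), f t) := by
      rw [← hGsub, one_div, inv_inv]
    rw [hrw, abs_sub_comm]
    linarith
  · -- s > k : impossible
    exact absurd h5 (by push_neg at h5 ⊢; linarith [hsM.2])
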